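/- arXiv:0809.0730 — 2 statements merged into one kernel-verified Lean document; each statement's English description precedes it below -/
import Mathlib

section
/- Let X be a quandle. The subgroups C_n^D(X) ⊆ C_n^R(X) generated by n-tuples (x_1,...,x_n) with x_{i+1} = x_i for some i form a subcomplex: the rack boundary ∂ maps C_n^D(X) into C_{n-1}^D(X). -/
/-- A quandle: an idempotent rack. -/
structure MyQuandle (X : Type) where
  act : X → X → X
  idem : ∀ a, act a a = a
  bij : ∀ b, Function.Bijective (fun x => act x b)
  dist : ∀ a b c, act (act a b) c = act (act a c) (act b c)

variable {X : Type}

def delTup {n : ℕ} (x : Fin (n + 1) → X) (i : Fin (n + 1)) : Fin n → X :=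
  fun j => x (i.succAbove j)

def actTup {n : ℕ} (Q : MyQuandle X) (x : Fin (n + 1) → X) (i : Fin (n + 1)) :
    Fin n → X :=
  fun j => if i.succAbove j < i then Q.act (x (i.succAbove j)) (x i)
           else x (i.succAbove j)

/-- Rack boundary of a basis tuple (`0`-based form of
`∂(x_1,…,x_n) = Σ_{i=2}^n (-1)^i [(…,x̂_i,…) - (x_1*x_i,…,x_{i-1}*x_i,x_{i+1},…)]`). -/
noncomputable def bdryBasis (Q : MyQuandle X) (n : ℕ) (x : Fin (n + 1) → X) :
    (Fin n → X) →₀ ℤ :=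
  ∑ i : Fin (n + 1), if 1 ≤ (i : ℕ) then
      ((-1 : ℤ) ^ ((i : ℕ) + 1)) •
        (Finsupp.single (delTup x i) 1 - Finsupp.single (actTup Q x i) 1)
    else 0

/-- The rack boundary homomorphism `∂ : C_{n+1}^R(X) → C_n^R(X)`. -/
noncomputable def bdry (Q : MyQuandle X) (n : ℕ) :
    ((Fin (n + 1) → X) →₀ ℤ) →ₗ[ℤ] ((Fin n → X) →₀ ℤ) :=
  Finsupp.lsum ℤ fun x => LinearMap.toSpanSingleton ℤ _ (bdryBasis Q n x)

/-- The degenerate subgroup `C_n^D(X)`: generated by tuples with two equal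
consecutive entries. -/
noncomputable def degenerate (X : Type) (n : ℕ) : Submodule ℤ ((Fin n → X) →₀ ℤ) :=
  Submodule.span ℤ
    {f | ∃ x : Fin n → X, (∃ i j : Fin n, (j : ℕ) = (i : ℕ) + 1 ∧ x i = x j) ∧
      f = Finsupp.single x 1}

/- ### Auxiliary lemmas -/

lemma succAbove_val {n : ℕ} (k : Fin (n + 1)) (p : Fin n) :
    ((k.succAbove p) : ℕ) = if (p : ℕ) < (k : ℕ) then (p : ℕ) else (p : ℕ) + 1 := by
  rcases lt_or_ge (p : ℕ) (k : ℕ) with h | h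
  · rw [if_pos h, Fin.succAbove_of_castSucc_lt _ _ (by simpa [Fin.lt_def] using h)]; simp
  · rw [if_neg (not_lt.2 h),
      Fin.succAbove_of_le_castSucc _ _ (by simpa [Fin.le_def] using h)]; simp

lemma single_mem_degenerate {n : ℕ} (y : Fin n → X) (i j : Fin n)
    (hij : (j : ℕ) = (i : ℕ) + 1) (h : y i = y j) :
    Finsupp.single y 1 ∈ degenerate X n :=
  Submodule.subset_span ⟨y, ⟨i, j, hij, h⟩, rfl⟩

lemma delTup_pair {n : ℕ} (x : Fin (n + 1) → X) (i j : Fin (n + 1))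
    (hij : (j : ℕ) = (i : ℕ) + 1) (hx : x i = x j) : delTup x i = delTup x j := by
  funext p
  simp only [delTup]
  have hvi := succAbove_val i p
  have hvj := succAbove_val j p
  rcases lt_trichotomy (p : ℕ) (i : ℕ) with h | h | h
  · congr 1
    exact Fin.ext (by rw [hvi, hvj, if_pos h, if_pos (by omega)])
  · have e1 : i.succAbove p = j := Fin.ext (by rw [hvi, if_neg (by omega)]; omega)
    have e2 : j.succAbove p = i := Fin.ext (by rw [hvj, if_pos (by omega)]; omega)
    rw [e1, e2, hx]
  · congr 1
    exact Fin.ext (by rw [hvi, hvj, if_neg (by omega), if_neg (by omega)])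

lemma actTup_pair {n : ℕ} (Q : MyQuandle X) (x : Fin (n + 1) → X) (i j : Fin (n + 1))
    (hij : (j : ℕ) = (i : ℕ) + 1) (hx : x i = x j) : actTup Q x i = actTup Q x j := by
  funext p
  simp only [actTup]
  have hvi := succAbove_val i p
  have hvj := succAbove_val j p
  rcases lt_trichotomy (p : ℕ) (i : ℕ) with h | h | h
  · have e : i.succAbove p = j.succAbove p :=
      Fin.ext (by rw [hvi, hvj, if_pos h, if_pos (by omega)])
    rw [if_pos (show i.succAbove p < i by rw [Fin.lt_def, hvi, if_pos h]; omega),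
      if_pos (show j.succAbove p < j by rw [Fin.lt_def, hvj, if_pos (by omega)]; omega),
      e, hx]
  · have e1 : i.succAbove p = j := Fin.ext (by rw [hvi, if_neg (by omega)]; omega)
    have e2 : j.succAbove p = i := Fin.ext (by rw [hvj, if_pos (by omega)]; omega)
    rw [if_neg (show ¬ i.succAbove p < i by rw [e1, Fin.lt_def]; omega),
      if_pos (show j.succAbove p < j by rw [e2, Fin.lt_def]; omega),
      e1, e2, hx, Q.idem]
  · have e : i.succAbove p = j.succAbove p :=
      Fin.ext (by rw [hvi, hvj, if_neg (by omega), if_neg (by omega)])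
    rw [if_neg (show ¬ i.succAbove p < i by rw [Fin.lt_def, hvi, if_neg (by omega)]; omega),
      if_neg (show ¬ j.succAbove p < j by rw [Fin.lt_def, hvj, if_neg (by omega)]; omega),
      e]

lemma actTup_zero {n : ℕ} (Q : MyQuandle X) (x : Fin (n + 1) → X) (i : Fin (n + 1))
    (hi : (i : ℕ) = 0) : actTup Q x i = delTup x i := by
  funext p
  simp only [actTup, delTup]
  rw [if_neg (by rw [Fin.lt_def]; omega)]

lemma bdryBasis_mem (Q : MyQuandle X) (n : ℕ) (x : Fin (n + 1) → X)
    (i j : Fin (n + 1)) (hij : (j : ℕ) = (i : ℕ) + 1) (hx : x i = x j) :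
    bdryBasis Q n x ∈ degenerate X n := by
  classical
  have hne : i ≠ j := by intro h; rw [h] at hij; omega
  have hjn : (j : ℕ) ≤ n := Nat.lt_succ_iff.1 j.isLt
  unfold bdryBasis
  rw [← Finset.sum_sdiff (Finset.subset_univ ({i, j} : Finset (Fin (n + 1))))]
  refine Submodule.add_mem _ (Submodule.sum_mem _ ?_) ?_
  · intro k hk
    simp only [Finset.mem_sdiff, Finset.mem_insert, Finset.mem_singleton] at hk
    obtain ⟨-, hk⟩ := hk
    push_neg at hk
    obtain ⟨hki, hkj⟩ := hk
    have hki' : (k : ℕ) ≠ (i : ℕ) := fun h => hki (Fin.ext h)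
    have hkj' : (k : ℕ) ≠ (j : ℕ) := fun h => hkj (Fin.ext h)
    split
    case isTrue h1 =>
      refine Submodule.smul_mem _ _ (Submodule.sub_mem _ ?_ ?_) <;>
      · rcases lt_or_gt_of_ne hki' with hlt | hgt
        · -- k < i : witnesses at positions i-1, i
          set p : Fin n := ⟨(i : ℕ) - 1, by omega⟩ with hp
          set q : Fin n := ⟨(i : ℕ), by omega⟩ with hq
          have hpv : (p : ℕ) = (i : ℕ) - 1 := rfl
          have hqv : (q : ℕ) = (i : ℕ) := rfl
          have e1 : k.succAbove p = i :=
            Fin.ext (by rw [succAbove_val, hpv, if_neg (by omega)]; omega)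
          have e2 : k.succAbove q = j :=
            Fin.ext (by rw [succAbove_val, hqv, if_neg (by omega)]; omega)
          first
          | exact single_mem_degenerate _ p q (by omega)
              (by simp only [delTup]; rw [e1, e2, hx])
          | exact single_mem_degenerate _ p q (by omega)
              (by simp only [actTup]
                  rw [if_neg (show ¬ k.succAbove p < k by rw [e1, Fin.lt_def]; omega),
                    if_neg (show ¬ k.succAbove q < k by rw [e2, Fin.lt_def]; omega), e1, e2, hx])
        · -- k > j : witnesses at positions i, j
          have hjk : (j : ℕ) < (k : ℕ) := by omega
          set p : Fin n := ⟨(i : ℕ), by omega⟩ with hp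
          set q : Fin n := ⟨(j : ℕ), by omega⟩ with hq
          have hpv : (p : ℕ) = (i : ℕ) := rfl
          have hqv : (q : ℕ) = (j : ℕ) := rfl
          have e1 : k.succAbove p = i :=
            Fin.ext (by rw [succAbove_val, hpv, if_pos (by omega)])
          have e2 : k.succAbove q = j :=
            Fin.ext (by rw [succAbove_val, hqv, if_pos (by omega)])
          first
          | exact single_mem_degenerate _ p q (by omega)
              (by simp only [delTup]; rw [e1, e2, hx])
          | exact single_mem_degenerate _ p q (by omega)
              (by simp only [actTup]
                  rw [if_pos (show k.succAbove p < k by rw [e1, Fin.lt_def]; omega),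
                    if_pos (show k.succAbove q < k by rw [e2, Fin.lt_def]; omega), e1, e2, hx])
    case isFalse h1 => exact Submodule.zero_mem _
  · rw [Finset.sum_pair hne]
    have hd := delTup_pair x i j hij hx
    have ha := actTup_pair Q x i j hij hx
    by_cases hi : 1 ≤ (i : ℕ)
    · rw [if_pos hi, if_pos (by omega : 1 ≤ (j : ℕ)), hd, ha, hij, ← add_smul,
        (by ring : ((-1 : ℤ) ^ ((i : ℕ) + 1) + (-1 : ℤ) ^ ((i : ℕ) + 1 + 1)) = 0), zero_smul]
      exact Submodule.zero_mem _
    · rw [if_neg hi, if_pos (by omega : 1 ≤ (j : ℕ)), zero_add]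
      have h0 : delTup x j = actTup Q x j := by
        rw [← hd, ← actTup_zero Q x i (by omega), ha]
      rw [h0, sub_self, smul_zero]
      exact Submodule.zero_mem _

/-- For a quandle, the degenerate chains form a subcomplex: the rack boundary
maps `C_{n+1}^D(X)` into `C_n^D(X)`. -/
theorem degenerate_subcomplex (Q : MyQuandle X) (n : ℕ)
    (c : (Fin (n + 1) → X) →₀ ℤ) (hc : c ∈ degenerate X (n + 1)) :
    bdry Q n c ∈ degenerate X n := by
  refine Submodule.span_induction ?_ ?_ ?_ ?_ hc
  · rintro f ⟨x, ⟨i, j, hij, hx⟩, rfl⟩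
    have hb : bdry Q n (Finsupp.single x 1) = bdryBasis Q n x := by
      simp [bdry]
    rw [hb]
    exact bdryBasis_mem Q n x i j hij hx
  · rw [map_zero]; exact Submodule.zero_mem _
  · intro a b _ _ ha hb; rw [map_add]; exact Submodule.add_mem _ ha hb
  · intro r a _ ha; rw [map_smul]; exact Submodule.smul_mem _ r ha
end

section
/- In the quandle chain complex of the dihedral quandle R_4, writing its elements as a=1, b=0, a*b=3, b*a=2, the chain 2·(a, a*b) is a boundary: ∂(-(a*b, b, a*b) - (a*b, b*a, a*b)) = 2(a, a*b) in C_2^Q(R_4). Hence the homology class of (a, a*b) in H_2^Q(R_4) has order dividing 2. -/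
/-- The dihedral quandle operation on `R_4 = ZMod 4`: `i * j = 2j - i`. -/
def dop (i j : ZMod 4) : ZMod 4 := 2 * j - i

/-- Quandle boundary of a basis triple:
`∂(x,y,z) = [(x,z) - (x*y,z)] - [(x,y) - (x*z,y*z)]`. -/
noncomputable def d3 (x y z : ZMod 4) : (ZMod 4 × ZMod 4) →₀ ℤ :=
  Finsupp.single (x, z) 1 - Finsupp.single (dop x y, z) 1
    - Finsupp.single (x, y) 1 + Finsupp.single (dop x z, dop y z) 1

/-- The degenerate 2-chains: spanned by pairs with equal entries. -/
noncomputable def deg2 : Submodule ℤ ((ZMod 4 × ZMod 4) →₀ ℤ) :=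
  Submodule.span ℤ {f | ∃ x : ZMod 4, f = Finsupp.single (x, x) 1}

/-- With `a = 1`, `b = 0`, `a*b = 3`, `b*a = 2` in `R_4`:
`∂(-(a*b, b, a*b) - (a*b, b*a, a*b)) = 2(a, a*b)` in `C_2^Q(R_4)`
(i.e. modulo degenerate chains); hence the class of `(a, a*b)` in
`H_2^Q(R_4)` has order dividing `2`. -/
theorem two_t1_is_boundary :
    Submodule.Quotient.mk (p := deg2) (-(d3 3 0 3) - d3 3 2 3) =
      (2 : ℤ) • Submodule.Quotient.mk (p := deg2)
        (Finsupp.single ((1 : ZMod 4), (3 : ZMod 4)) 1) := by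
  rw [← Submodule.Quotient.mk_smul, Submodule.Quotient.eq]
  have h : (-(d3 3 0 3) - d3 3 2 3) -
      (2 : ℤ) • Finsupp.single ((1 : ZMod 4), (3 : ZMod 4)) 1 =
      (-2 : ℤ) • Finsupp.single ((3 : ZMod 4), (3 : ZMod 4)) 1 := by
    simp only [d3, dop, show (2*0-3:ZMod 4)=1 from by decide,
      show (2*3-3:ZMod 4)=3 from by decide, show (2*3-0:ZMod 4)=2 from by decide,
      show (2*2-3:ZMod 4)=1 from by decide, show (2*3-2:ZMod 4)=0 from by decide]
    abel
  rw [h]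
  exact Submodule.smul_mem _ _ (Submodule.subset_span ⟨3, rfl⟩)
end
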